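/- Let a < 0 and let μ be a Borel probability measure on ℝ with support contained in [a,∞) such that E_μ[e^X] = 1. Then for every λ > a, μ({x : x ≥ λ}) ≤ min{1, (1 − e^a)/(e^λ − e^a)}. Moreover this bound is sharp: sup over all such measures μ of μ({x : x ≥ λ}) equals min{1, (1 − e^a)/(e^λ − e^a)}. -/

import Mathlib

open MeasureTheory Set Filter Topology
open scoped BigOperators ENNReal

noncomputable section

/-- The support of a measure: points all of whose open neighborhoods have
positive measure. -/
def msupport {E : Type*} [TopologicalSpace E] [MeasurableSpace E]
    (μ : Measure E) : Set E :=
  {x | ∀ U : Set E, IsOpen U → x ∈ U → μ U ≠ 0}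

lemma null_of_msupport {μ : Measure ℝ} {a : ℝ} (h : msupport μ ⊆ Ici a) :
    μ (Iio a) = 0 := by
  apply measure_null_of_locally_null
  intro x hx
  have hxs : x ∉ msupport μ := fun hm => (not_le.2 (mem_Iio.1 hx)) (mem_Ici.1 (h hm))
  simp only [msupport, mem_setOf_eq, not_forall] at hxs
  obtain ⟨U, hUopen, hxU, hU0⟩ := hxs
  push_neg at hU0
  exact ⟨U, mem_nhdsWithin_of_mem_nhds (hUopen.mem_nhds hxU), hU0⟩

lemma integrable_exp_dirac (c : ℝ) :
    Integrable (fun x => Real.exp x) (Measure.dirac c) := by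
  have h : (fun x => Real.exp x) =ᵐ[Measure.dirac c] fun _ => Real.exp c := by
    rw [ae_dirac_eq]; exact eventually_pure.2 rfl
  exact (integrable_const (Real.exp c)).congr h.symm

lemma tail_bound (a : ℝ) (ha : a < 0) (lam : ℝ) (hlam : a < lam)
    (μ : Measure ℝ) (hprob : IsProbabilityMeasure μ) (hsupp : msupport μ ⊆ Ici a)
    (hint : Integrable (fun x => Real.exp x) μ) (hexp : (∫ x, Real.exp x ∂μ) = 1) :
    (μ (Ici lam)).toReal ≤ min 1 ((1 - Real.exp a) / (Real.exp lam - Real.exp a)) := by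
  have hea : Real.exp a < Real.exp lam := Real.exp_lt_exp.2 hlam
  set p := (μ (Ici lam)).toReal with hp
  have hp1 : p ≤ 1 := by
    have h1 : μ (Ici lam) ≤ 1 := prob_le_one
    simpa using ENNReal.toReal_mono ENNReal.one_ne_top h1
  have hae : ∀ᵐ x ∂μ, a ≤ x := by
    have h0 : μ (Iio a) = 0 := null_of_msupport hsupp
    refine (ae_iff).2 ?_
    simpa [Iio] using h0
  -- the comparison function
  set g : ℝ → ℝ := fun x =>
    Real.exp a + (Real.exp lam - Real.exp a) * (Ici lam).indicator (fun _ => (1:ℝ)) x with hg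
  have hgint : Integrable g μ := by
    exact (integrable_const _).add
      (((integrable_const (1:ℝ)).indicator measurableSet_Ici).const_mul _)
  have hmono : ∀ᵐ x ∂μ, g x ≤ Real.exp x := by
    filter_upwards [hae] with x hx
    by_cases h : lam ≤ x
    · simp only [hg, indicator_of_mem (mem_Ici.2 h)]
      have := Real.exp_le_exp.2 h
      nlinarith
    · simp only [hg, indicator_of_notMem (fun hc => h (mem_Ici.1 hc))]
      have := Real.exp_le_exp.2 hx
      nlinarith
  have hgi : (∫ x, g x ∂μ) = Real.exp a + (Real.exp lam - Real.exp a) * p := by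
    rw [hg]
    rw [integral_add (integrable_const _)
      (((integrable_const (1:ℝ)).indicator measurableSet_Ici).const_mul _)]
    rw [integral_const, integral_const_mul, integral_indicator_const _ measurableSet_Ici]
    simp [measure_univ]
    exact Or.inl rfl
  have hkey : Real.exp a + (Real.exp lam - Real.exp a) * p ≤ 1 := by
    rw [← hgi, ← hexp]
    exact integral_mono_ae hgint hint hmono
  refine le_min hp1 ?_
  rw [le_div_iff₀ (by linarith)]
  nlinarith

lemma witness_le (a : ℝ) (ha : a < 0) (lam : ℝ) (hlam : a < lam) :
    ∃ μ : Measure ℝ, IsProbabilityMeasure μ ∧ msupport μ ⊆ Ici a ∧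
      Integrable (fun x => Real.exp x) μ ∧ (∫ x, Real.exp x ∂μ) = 1 ∧
      (μ (Ici lam)).toReal
        = min 1 ((1 - Real.exp a) / (Real.exp lam - Real.exp a)) := by
  have hea : Real.exp a < Real.exp lam := Real.exp_lt_exp.2 hlam
  have hea1 : Real.exp a < 1 := by
    have := Real.exp_lt_exp.2 ha; rwa [Real.exp_zero] at this
  rcases le_or_gt lam 0 with hl0 | hl0
  · -- lam ≤ 0 : dirac at 0
    have hel : Real.exp lam ≤ 1 := by
      have := Real.exp_le_exp.2 hl0; rwa [Real.exp_zero] at this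
    refine ⟨Measure.dirac 0, inferInstance, ?_, integrable_exp_dirac 0,
      by simp [integral_dirac], ?_⟩
    · intro x hx
      by_contra hax
      rw [mem_Ici, not_le] at hax
      refine hx (Iio a) isOpen_Iio hax ?_
      rw [Measure.dirac_apply, indicator_of_notMem (by simpa using not_lt.2 ha.le)]
    · rw [Measure.dirac_apply, indicator_of_mem (by simpa using hl0)]
      rw [min_eq_left ((one_le_div₀ (by linarith)).2 (by linarith))]
      simp
  · -- 0 < lam : mixture of diracs at lam and a
    set q : ℝ := (1 - Real.exp a) / (Real.exp lam - Real.exp a) with hqdef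
    have hd : (0:ℝ) < Real.exp lam - Real.exp a := by linarith
    have h1l : (1:ℝ) < Real.exp lam := by
      have := Real.exp_lt_exp.2 hl0; rwa [Real.exp_zero] at this
    have hq0 : 0 < q := div_pos (by linarith) hd
    have hq1 : q ≤ 1 := (div_le_one hd).2 (by linarith)
    set μ₀ : Measure ℝ :=
      ENNReal.ofReal q • Measure.dirac lam + ENNReal.ofReal (1 - q) • Measure.dirac a
      with hμ₀
    have happ : ∀ s : Set ℝ, μ₀ s = ENNReal.ofReal q * Measure.dirac lam s
        + ENNReal.ofReal (1 - q) * Measure.dirac a s := by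
      intro s
      simp [hμ₀, Measure.add_apply, Measure.smul_apply, smul_eq_mul]
    have hprob : IsProbabilityMeasure μ₀ := by
      constructor
      rw [happ]
      simp only [measure_univ, mul_one]
      rw [← ENNReal.ofReal_add hq0.le (by linarith)]
      norm_num
    have hint : Integrable (fun x => Real.exp x) μ₀ := by
      exact ((integrable_exp_dirac lam).smul_measure ENNReal.ofReal_ne_top).add_measure
        ((integrable_exp_dirac a).smul_measure ENNReal.ofReal_ne_top)
    refine ⟨μ₀, hprob, ?_, hint, ?_, ?_⟩
    · intro x hx
      by_contra hax
      rw [mem_Ici, not_le] at hax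
      refine hx (Iio a) isOpen_Iio hax ?_
      rw [happ, Measure.dirac_apply, Measure.dirac_apply,
        indicator_of_notMem (by simpa using not_lt.2 hlam.le),
        indicator_of_notMem (by simpa using lt_irrefl a)]
      simp
    · rw [hμ₀, integral_add_measure ((integrable_exp_dirac lam).smul_measure
          ENNReal.ofReal_ne_top) ((integrable_exp_dirac a).smul_measure
          ENNReal.ofReal_ne_top),
        integral_smul_measure, integral_smul_measure, integral_dirac, integral_dirac,
        ENNReal.toReal_ofReal hq0.le, ENNReal.toReal_ofReal (by linarith : (0:ℝ) ≤ 1 - q)]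
      have hqm : q * (Real.exp lam - Real.exp a) = 1 - Real.exp a :=
        div_mul_cancel₀ _ (ne_of_gt hd)
      simp only [smul_eq_mul]
      nlinarith [hqm]
    · rw [happ, Measure.dirac_apply, Measure.dirac_apply,
        indicator_of_mem (by simp : lam ∈ Ici lam),
        indicator_of_notMem (by simpa using not_le.2 hlam)]
      rw [min_eq_right hq1]
      simp [ENNReal.toReal_ofReal hq0.le]

/-- sharp tail bound for a variable bounded below by `a < 0`
satisfying `E[e^X] = 1`. -/
theorem sharp_tail_bound_jarzynski (a : ℝ) (ha : a < 0) (lam : ℝ)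
    (hlam : a < lam) :
    (∀ μ : Measure ℝ, IsProbabilityMeasure μ → msupport μ ⊆ Ici a →
      Integrable (fun x => Real.exp x) μ → (∫ x, Real.exp x ∂μ) = 1 →
      (μ (Ici lam)).toReal ≤
        min 1 ((1 - Real.exp a) / (Real.exp lam - Real.exp a))) ∧
    (⨆ μ ∈ {μ : Measure ℝ | IsProbabilityMeasure μ ∧ msupport μ ⊆ Ici a ∧
        Integrable (fun x => Real.exp x) μ ∧ (∫ x, Real.exp x ∂μ) = 1},
      (μ (Ici lam)).toReal) =
      min 1 ((1 - Real.exp a) / (Real.exp lam - Real.exp a)) := by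
  have hea : Real.exp a < Real.exp lam := Real.exp_lt_exp.2 hlam
  have hea1 : Real.exp a < 1 := by
    have := Real.exp_lt_exp.2 ha; rwa [Real.exp_zero] at this
  set M := min 1 ((1 - Real.exp a) / (Real.exp lam - Real.exp a)) with hM
  have hM0 : 0 ≤ M :=
    le_min zero_le_one (div_nonneg (by linarith) (by linarith))
  refine ⟨fun μ h1 h2 h3 h4 => tail_bound a ha lam hlam μ h1 h2 h3 h4, ?_⟩
  have hb : ∀ μ : Measure ℝ,
      (⨆ _ : μ ∈ {μ : Measure ℝ | IsProbabilityMeasure μ ∧ msupport μ ⊆ Ici a ∧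
        Integrable (fun x => Real.exp x) μ ∧ (∫ x, Real.exp x ∂μ) = 1},
        (μ (Ici lam)).toReal) ≤ M := fun μ =>
    Real.iSup_le (fun h => tail_bound a ha lam hlam μ h.1 h.2.1 h.2.2.1 h.2.2.2) hM0
  apply le_antisymm
  · exact Real.iSup_le hb hM0
  · obtain ⟨μ₀, h1, h2, h3, h4, h5⟩ := witness_le a ha lam hlam
    have hmem : μ₀ ∈ {μ : Measure ℝ | IsProbabilityMeasure μ ∧ msupport μ ⊆ Ici a ∧
        Integrable (fun x => Real.exp x) μ ∧ (∫ x, Real.exp x ∂μ) = 1} :=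
      ⟨h1, h2, h3, h4⟩
    have hbdd : BddAbove (Set.range fun μ : Measure ℝ =>
        ⨆ _ : μ ∈ {μ : Measure ℝ | IsProbabilityMeasure μ ∧ msupport μ ⊆ Ici a ∧
          Integrable (fun x => Real.exp x) μ ∧ (∫ x, Real.exp x ∂μ) = 1},
          (μ (Ici lam)).toReal) := ⟨M, by rintro y ⟨μ, rfl⟩; exact hb μ⟩
    have := le_ciSup hbdd μ₀
    rwa [ciSup_pos hmem, h5] at this
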